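/- Let ν be a class (ii) distribution with associated functions f, φ, Φ, let θ>1, and let F_Φ be the associated divergence-generating function. Then for any probability measure η on [0,∞) with density g, if D^α(η|ν) < ∞ for some α>1 (α-divergence), then D_{F_Φ}(η|ν) < ∞. -/

import Mathlib

open Filter MeasureTheory Set
open scoped ENNReal Topology

noncomputable section

/-- The `F`-divergence `D_F(η|ν)` between a reference density `f` and an
alternative density `g` on `(0,∞)` (the value `⊤` encodes an infinite divergence). -/
def Ddiv (F f g : ℝ → ℝ) : ℝ≥0∞ :=
  ∫⁻ x in Set.Ioi (0 : ℝ), ENNReal.ofReal (F (g x / f x) * f x)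

/-- Generator of the polynomial (α-) divergence: `F(y) = (y^α - 1)/(α(α-1))`. -/
def Falpha (α : ℝ) : ℝ → ℝ := fun y => (y ^ α - 1) / (α * (α - 1))

/-- Class (i): the log-density grows at least linearly, `lim φ(x)/x > c > 0`. -/
def IsClassI (φ : ℝ → ℝ) : Prop :=
  ∃ c : ℝ, 0 < c ∧ ∀ᶠ x in atTop, c < φ x / x

/-- Data witnessing that a distribution with log-density `φ` (density `exp(-φ)`) is of
class (ii): heavier than exponential but lighter than any power law, together with the
auxiliary function `Φ` and the inverse `Ψ = Φ⁻¹` of its restriction to `[x̄, ∞)`. -/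
structure ClassIIData (φ : ℝ → ℝ) : Type where
  xbar : ℝ
  Φ : ℝ → ℝ
  Ψ : ℝ → ℝ
  xbar_pos : 0 < xbar
  tendsto_div_id : Tendsto (fun x => φ x / x) atTop (nhds 0)
  tendsto_div_log : Tendsto (fun x => φ x / Real.log x) atTop atTop
  pos : ∀ x ∈ Set.Ici xbar, 0 < Φ x
  strictConcave : StrictConcaveOn ℝ (Set.Ici xbar) Φ
  smooth : ContDiffOn ℝ 2 Φ (Set.Ici xbar)
  strictMono : StrictMonoOn Φ (Set.Ici xbar)
  inv_left : ∀ x ∈ Set.Ici xbar, Ψ (Φ x) = x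
  inv_right : ∀ y ∈ Set.Ici (Φ xbar), Φ (Ψ y) = y
  liminf_pos : ∃ c : ℝ, 0 < c ∧ ∀ᶠ x in atTop, c ≤ Ψ (φ x) / x
  limsup_lt_top : ∃ C : ℝ, ∀ᶠ x in atTop, Ψ (φ x) / x ≤ C

namespace ClassIIData

variable {φ : ℝ → ℝ}

/-- `ȳ = exp(Φ(x̄))`. -/
def ybar (d : ClassIIData φ) : ℝ := Real.exp (d.Φ d.xbar)

/-- The constant `a = (1+log ȳ)/(Φ⁻¹(log ȳ)^θ + θ Φ⁻¹(log ȳ)^{θ-1} (Φ⁻¹)'(log ȳ))`. -/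
def aconst (d : ClassIIData φ) (θ : ℝ) : ℝ :=
  (1 + Real.log d.ybar) /
    (d.Ψ (Real.log d.ybar) ^ θ +
      θ * d.Ψ (Real.log d.ybar) ^ (θ - 1) * deriv d.Ψ (Real.log d.ybar))

/-- The constant `b = ȳ log ȳ - a ȳ Φ⁻¹(log ȳ)^θ`. -/
def bconst (d : ClassIIData φ) (θ : ℝ) : ℝ :=
  d.ybar * Real.log d.ybar - d.aconst θ * d.ybar * d.Ψ (Real.log d.ybar) ^ θ

/-- The divergence generator `F_Φ`: `y log y` for `y ≤ ȳ` and
`a y Φ⁻¹(log y)^θ + b` for `y > ȳ`. -/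
def FPhi (d : ClassIIData φ) (θ : ℝ) : ℝ → ℝ := fun y =>
  if y ≤ d.ybar then y * Real.log y
  else d.aconst θ * y * d.Ψ (Real.log y) ^ θ + d.bconst θ

/-- `ψ(x) = a Φ⁻¹(x)^θ`. -/
def psiFun (d : ClassIIData φ) (θ : ℝ) : ℝ → ℝ := fun x => d.aconst θ * d.Ψ x ^ θ

/-- The integrand of `I(c) = ∫_c^∞ e^y (ψ(y)+ψ'(y))(ψ'(y)+ψ''(y)) f((F_Φ'(e^y)-α₁)/α₂) dy`. -/
def Iintegrand (d : ClassIIData φ) (θ α₁ α₂ : ℝ) (f : ℝ → ℝ) : ℝ → ℝ := fun y =>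
  Real.exp y * (d.psiFun θ y + deriv (d.psiFun θ) y) *
    (deriv (d.psiFun θ) y + deriv (deriv (d.psiFun θ)) y) *
    f ((deriv (d.FPhi θ) (Real.exp y) - α₁) / α₂)

end ClassIIData

/-- Convex conjugate over `s ≥ 0`: `F*(x) = sup_{s ≥ 0} (x s - F(s))`. -/
def Fstar (F : ℝ → ℝ) : ℝ → ℝ := fun x => sSup ((fun s => x * s - F s) '' Set.Ici (0 : ℝ))

/-- Pseudo-regular variation: `limsup_{c→1} limsup_{x→∞} h(cx)/h(x) = 1`,
spelled out in ε-form. -/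
def PseudoRegularlyVarying (h : ℝ → ℝ) : Prop :=
  (∀ ε > (0:ℝ), ∀ᶠ c in nhds (1:ℝ), ∀ᶠ x in atTop, h (c * x) / h x ≤ 1 + ε) ∧
  (∀ ε > (0:ℝ), ∃ᶠ c in nhds (1:ℝ), ∃ᶠ x in atTop, 1 - ε ≤ h (c * x) / h x)

/-- Proposition 4.3, second half: finite α-divergence implies finite
`F_Φ`-divergence. -/
theorem stmt8
    (φ f : ℝ → ℝ)
    (hf : ∀ x ∈ Set.Ioi (0:ℝ), f x = Real.exp (-(φ x)))
    (hfc : ContinuousOn f (Set.Ioi 0))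
    (hfint : ∫ x in Set.Ioi (0:ℝ), f x = 1)
    (d : ClassIIData φ) (θ : ℝ) (hθ : 1 < θ)
    (g : ℝ → ℝ) (hgc : ContinuousOn g (Set.Ioi 0))
    (hg0 : ∀ x ∈ Set.Ioi (0:ℝ), 0 ≤ g x)
    (hgint : ∫ x in Set.Ioi (0:ℝ), g x = 1)
    (hfin : ∃ α : ℝ, 1 < α ∧ Ddiv (Falpha α) f g < ⊤) :
    Ddiv (d.FPhi θ) f g < ⊤ := by
  obtain ⟨α, hα, hDα⟩ := hfin
  have hfpos : ∀ x ∈ Set.Ioi (0:ℝ), 0 < f x := fun x hx => (hf x hx) ▸ Real.exp_pos _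
  -- continuity of φ on (0,∞)
  have hφc : ContinuousOn φ (Set.Ioi (0:ℝ)) := by
    have h1 : ContinuousOn (fun x => -Real.log (f x)) (Set.Ioi (0:ℝ)) :=
      ((hfc.log (fun x hx => (hfpos x hx).ne')).neg)
    refine h1.congr fun x hx => ?_
    beta_reduce; rw [hf x hx, Real.log_exp]; ring
  -- φ → ∞
  have hφtop : Tendsto φ atTop atTop := by
    have h1 : ∀ᶠ x in atTop, 1 ≤ φ x / Real.log x := d.tendsto_div_log.eventually_ge_atTop 1
    have h2 : ∀ᶠ x in atTop, (1:ℝ) < x := eventually_gt_atTop 1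
    refine tendsto_atTop_mono' atTop ?_ Real.tendsto_log_atTop
    filter_upwards [h1, h2] with x hx hx1
    have hlog : 0 < Real.log x := Real.log_pos hx1
    calc Real.log x = 1 * Real.log x := (one_mul _).symm
      _ ≤ (φ x / Real.log x) * Real.log x := by
          exact mul_le_mul_of_nonneg_right hx hlog.le
      _ = φ x := div_mul_cancel₀ _ hlog.ne'
  set M : ℝ := θ / (α - 1) with hMdef
  have hM : 0 < M := div_pos (lt_trans one_pos hθ) (sub_pos.2 hα)
  obtain ⟨C, hC⟩ := d.limsup_lt_top
  obtain ⟨c, hc, hcev⟩ := d.liminf_pos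
  -- choose x0
  have hev : ∀ᶠ x in atTop, d.Ψ (φ x) ≤ C * x ∧ c * x ≤ d.Ψ (φ x) ∧
      M * Real.log x ≤ φ x ∧ d.Φ d.xbar ≤ φ x ∧ d.xbar ≤ c * x ∧ (1:ℝ) ≤ x := by
    have e1 : ∀ᶠ x in atTop, d.Ψ (φ x) ≤ C * x := by
      filter_upwards [hC, eventually_gt_atTop (0:ℝ)] with x h hx
      calc d.Ψ (φ x) = (d.Ψ (φ x) / x) * x := by field_simp
        _ ≤ C * x := mul_le_mul_of_nonneg_right h hx.le
    have e2 : ∀ᶠ x in atTop, c * x ≤ d.Ψ (φ x) := by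
      filter_upwards [hcev, eventually_gt_atTop (0:ℝ)] with x h hx
      calc c * x ≤ (d.Ψ (φ x) / x) * x := mul_le_mul_of_nonneg_right h hx.le
        _ = d.Ψ (φ x) := by field_simp
    have e3 : ∀ᶠ x in atTop, M * Real.log x ≤ φ x := by
      filter_upwards [d.tendsto_div_log.eventually_ge_atTop M, eventually_gt_atTop (1:ℝ)]
        with x h hx1
      have hlog : 0 < Real.log x := Real.log_pos hx1
      calc M * Real.log x ≤ (φ x / Real.log x) * Real.log x :=
            mul_le_mul_of_nonneg_right h hlog.le
        _ = φ x := div_mul_cancel₀ _ hlog.ne'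
    have e4 : ∀ᶠ x in atTop, d.Φ d.xbar ≤ φ x := hφtop.eventually_ge_atTop _
    have e5 : ∀ᶠ x in atTop, d.xbar ≤ c * x := by
      have : Tendsto (fun x => c * x) atTop atTop :=
        (tendsto_id.const_mul_atTop hc)
      exact this.eventually_ge_atTop _
    filter_upwards [e1, e2, e3, e4, e5, eventually_ge_atTop (1:ℝ)] with x h1 h2 h3 h4 h5 h6
    exact ⟨h1, h2, h3, h4, h5, h6⟩
  obtain ⟨x0, hx0⟩ := eventually_atTop.1 hev
  have hx0pos : (0:ℝ) < x0 := lt_of_lt_of_le one_pos (hx0 x0 le_rfl).2.2.2.2.2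
  set t0 : ℝ := φ x0 with ht0def
  have ht0 : d.Φ d.xbar ≤ t0 := (hx0 x0 le_rfl).2.2.2.1
  -- surjectivity of φ onto [t0, ∞) with preimages ≥ x0
  have hsurj : ∀ t, t0 ≤ t → ∃ x, x0 ≤ x ∧ φ x = t := by
    intro t ht
    obtain ⟨X, hX⟩ := (hφtop.eventually_ge_atTop t).exists_forall_of_atTop
    set X' := max X x0 with hX'def
    have hX'0 : x0 ≤ X' := le_max_right _ _
    have hIcc : Set.Icc x0 X' ⊆ Set.Ioi (0:ℝ) := fun z hz => lt_of_lt_of_le hx0pos hz.1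
    have h1 : Set.Icc (φ x0) (φ X') ⊆ φ '' Set.Icc x0 X' :=
      intermediate_value_Icc hX'0 (hφc.mono hIcc)
    have htmem : t ∈ Set.Icc (φ x0) (φ X') := ⟨ht, hX X' (le_max_left _ _)⟩
    obtain ⟨x, hxmem, hφx⟩ := h1 htmem
    exact ⟨x, hxmem.1, hφx⟩
  -- Ψ lower bound: Ψ s ≥ x̄ for s ≥ Φ x̄
  have hΨlow : ∀ s, d.Φ d.xbar ≤ s → d.xbar ≤ d.Ψ s := by
    intro s hs
    obtain ⟨x, hxx0, hφx⟩ := hsurj (max s t0) (le_max_right _ _)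
    obtain ⟨_, h2, _, h4, h5, _⟩ := hx0 x hxx0
    have hz : d.xbar ≤ d.Ψ (φ x) := le_trans h5 h2
    have hΦz : d.Φ (d.Ψ (φ x)) = φ x := d.inv_right _ h4
    have hcont : ContinuousOn d.Φ (Set.Icc d.xbar (d.Ψ (φ x))) :=
      (d.smooth.continuousOn).mono Set.Icc_subset_Ici_self
    have h1 : Set.Icc (d.Φ d.xbar) (d.Φ (d.Ψ (φ x))) ⊆ d.Φ '' Set.Icc d.xbar (d.Ψ (φ x)) :=
      intermediate_value_Icc hz hcont
    have hsmem : s ∈ Set.Icc (d.Φ d.xbar) (d.Φ (d.Ψ (φ x))) := by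
      rw [hΦz, hφx]; exact ⟨hs, le_max_left _ _⟩
    obtain ⟨z, hzmem, hΦzs⟩ := h1 hsmem
    have hΨs : d.Ψ s = z := by rw [← hΦzs, d.inv_left z (Set.Icc_subset_Ici_self hzmem)]
    rw [hΨs]; exact hzmem.1
  -- Ψ monotone on [Φ x̄, ∞)
  have hΨmono : ∀ s t, d.Φ d.xbar ≤ s → s ≤ t → d.Ψ s ≤ d.Ψ t := by
    intro s t hs hst
    by_contra hlt
    push_neg at hlt
    have h1 := d.strictMono (hΨlow t (hs.trans hst)) (hΨlow s hs) hlt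
    rw [d.inv_right t (hs.trans hst), d.inv_right s hs] at h1
    exact absurd hst (not_le.2 h1)
  set C' : ℝ := max C 1 with hC'def
  have hC'pos : (0:ℝ) < C' := lt_of_lt_of_le one_pos (le_max_right _ _)
  -- tail bound for Ψ
  have hΨtail : ∀ t, t0 ≤ t → d.Ψ t ≤ C' * Real.exp (t / M) := by
    intro t ht
    obtain ⟨x, hxx0, hφx⟩ := hsurj t ht
    obtain ⟨h1, _, h3, _, _, h6⟩ := hx0 x hxx0
    have hxexp : x ≤ Real.exp (t / M) := by
      have hlog : Real.log x ≤ t / M := by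
        rw [← hφx]
        rw [le_div_iff₀ hM]
        linarith [h3]
      calc x = Real.exp (Real.log x) := (Real.exp_log (lt_of_lt_of_le one_pos h6)).symm
        _ ≤ Real.exp (t / M) := Real.exp_le_exp.2 hlog
    calc d.Ψ t = d.Ψ (φ x) := by rw [hφx]
      _ ≤ C * x := h1
      _ ≤ C' * x := mul_le_mul_of_nonneg_right (le_max_left _ _) (le_trans one_pos.le h6)
      _ ≤ C' * Real.exp (t / M) := mul_le_mul_of_nonneg_left hxexp hC'pos.le
  -- the key pointwise bound on F_Φ
  set A : ℝ := |d.aconst θ| with hAdef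
  set B : ℝ := |d.bconst θ| with hBdef
  set R : ℝ := d.Ψ t0 with hRdef
  have hRpos : 0 < R := lt_of_lt_of_le d.xbar_pos (hΨlow t0 ht0)
  set C₁ : ℝ := max (max (d.ybar ^ (2:ℕ)) (A * Real.exp t0 * R ^ θ + B)) (A * C' ^ θ + B)
    with hC₁def
  have hybarpos : 0 < d.ybar := Real.exp_pos _
  have hC₁pos : 0 < C₁ := lt_of_lt_of_le (by positivity) ((le_max_left _ _).trans (le_max_left _ _))
  have hkey : ∀ y : ℝ, 0 ≤ y → d.FPhi θ y ≤ C₁ * (1 + y ^ α) := by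
    intro y hy
    have hyα : (0:ℝ) ≤ y ^ α := Real.rpow_nonneg hy _
    have h1C : C₁ ≤ C₁ * (1 + y ^ α) := le_mul_of_one_le_right hC₁pos.le (by linarith)
    have hB : 0 ≤ B := abs_nonneg _
    have hA : 0 ≤ A := abs_nonneg _
    simp only [ClassIIData.FPhi]
    by_cases hyb : y ≤ d.ybar
    · rw [if_pos hyb]
      have hbound : y * Real.log y ≤ C₁ := by
        rcases eq_or_lt_of_le hy with h0 | h0
        · rw [← h0]; simpa using hC₁pos.le
        · have hl := Real.log_le_sub_one_of_pos h0
          have hy2 : (d.ybar : ℝ) ^ (2:ℕ) ≤ C₁ := (le_max_left _ _).trans (le_max_left _ _)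
          have m1 : y * Real.log y ≤ y * (y - 1) := mul_le_mul_of_nonneg_left hl hy
          have m2 : y * y ≤ d.ybar * d.ybar := mul_self_le_mul_self hy hyb
          have m3 : (d.ybar : ℝ) ^ (2:ℕ) = d.ybar * d.ybar := sq d.ybar
          nlinarith
      linarith
    · rw [if_neg hyb]
      push_neg at hyb
      have hy0 : 0 < y := lt_trans hybarpos hyb
      have hsΦ : d.Φ d.xbar < Real.log y := by
        rw [Real.lt_log_iff_exp_lt hy0]; exact hyb
      set s := Real.log y with hsdef
      have hP : d.xbar ≤ d.Ψ s := hΨlow s hsΦ.le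
      have hP0 : 0 < d.Ψ s := lt_of_lt_of_le d.xbar_pos hP
      have hPθ0 : (0:ℝ) ≤ d.Ψ s ^ θ := Real.rpow_nonneg hP0.le _
      have habs : d.aconst θ * y * d.Ψ s ^ θ + d.bconst θ ≤ A * (y * d.Ψ s ^ θ) + B := by
        have h1 : d.aconst θ * (y * d.Ψ s ^ θ) ≤ A * (y * d.Ψ s ^ θ) :=
          mul_le_mul_of_nonneg_right (le_abs_self _) (by positivity)
        have h2 : d.bconst θ ≤ B := le_abs_self _
        calc d.aconst θ * y * d.Ψ s ^ θ + d.bconst θ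
            = d.aconst θ * (y * d.Ψ s ^ θ) + d.bconst θ := by ring
          _ ≤ A * (y * d.Ψ s ^ θ) + B := add_le_add h1 h2
      by_cases hst : s ≤ t0
      · have hPR : d.Ψ s ≤ R := hΨmono s t0 hsΦ.le hst
        have hyexp : y ≤ Real.exp t0 := by
          rw [← Real.exp_log hy0]; exact Real.exp_le_exp.2 hst
        have hPθ : d.Ψ s ^ θ ≤ R ^ θ :=
          Real.rpow_le_rpow hP0.le hPR (by linarith)
        have hmul : y * d.Ψ s ^ θ ≤ Real.exp t0 * R ^ θ :=
          mul_le_mul hyexp hPθ hPθ0 (Real.exp_pos _).le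
        have hmid : A * Real.exp t0 * R ^ θ + B ≤ C₁ :=
          (le_max_right _ _).trans (le_max_left _ _)
        calc d.aconst θ * y * d.Ψ s ^ θ + d.bconst θ
            ≤ A * (y * d.Ψ s ^ θ) + B := habs
          _ ≤ A * (Real.exp t0 * R ^ θ) + B := by
              have := mul_le_mul_of_nonneg_left hmul hA
              linarith
          _ = A * Real.exp t0 * R ^ θ + B := by ring
          _ ≤ C₁ := hmid
          _ ≤ C₁ * (1 + y ^ α) := h1C
      · push_neg at hst
        have hPt : d.Ψ s ≤ C' * Real.exp (s / M) := hΨtail s hst.le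
        have hθ0 : (0:ℝ) ≤ θ := by linarith
        have hCθ0 : (0:ℝ) ≤ C' ^ θ := Real.rpow_nonneg hC'pos.le _
        have hPθ : d.Ψ s ^ θ ≤ C' ^ θ * y ^ (α - 1) := by
          have h1 : d.Ψ s ^ θ ≤ (C' * Real.exp (s / M)) ^ θ :=
            Real.rpow_le_rpow hP0.le hPt hθ0
          have h2 : (C' * Real.exp (s / M)) ^ θ = C' ^ θ * (Real.exp (s / M)) ^ θ :=
            Real.mul_rpow hC'pos.le (Real.exp_pos _).le
          have h3 : (Real.exp (s / M)) ^ θ = y ^ (α - 1) := by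
            rw [Real.rpow_def_of_pos (Real.exp_pos _), Real.log_exp,
              Real.rpow_def_of_pos hy0]
            rw [← hsdef]
            congr 1
            have hθne : θ ≠ 0 := by linarith
            rw [hMdef, div_div_eq_mul_div, div_mul_cancel₀ _ hθne]
          rw [h2, h3] at h1
          exact h1
        have hyy : y * y ^ (α - 1) = y ^ α := by
          rw [Real.rpow_def_of_pos hy0, Real.rpow_def_of_pos hy0]
          rw [← Real.exp_log hy0]
          rw [← Real.exp_add, Real.log_exp]
          congr 1
          ring
        have h4 : y * d.Ψ s ^ θ ≤ C' ^ θ * y ^ α := by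
          calc y * d.Ψ s ^ θ ≤ y * (C' ^ θ * y ^ (α - 1)) :=
                mul_le_mul_of_nonneg_left hPθ hy0.le
            _ = C' ^ θ * (y * y ^ (α - 1)) := by ring
            _ = C' ^ θ * y ^ α := by rw [hyy]
        have hAC : A * C' ^ θ + B ≤ C₁ := le_max_right _ _
        calc d.aconst θ * y * d.Ψ s ^ θ + d.bconst θ
            ≤ A * (y * d.Ψ s ^ θ) + B := habs
          _ ≤ A * (C' ^ θ * y ^ α) + B := by
              have := mul_le_mul_of_nonneg_left h4 hA
              linarith
          _ = A * C' ^ θ * y ^ α + B := by ring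
          _ ≤ C₁ * y ^ α + C₁ := by
              have h7 : 0 ≤ A * C' ^ θ := mul_nonneg hA hCθ0
              have h6 : A * C' ^ θ * y ^ α ≤ C₁ * y ^ α :=
                mul_le_mul_of_nonneg_right (by linarith) hyα
              linarith
          _ = C₁ * (1 + y ^ α) := by ring
  -- integral assembly
  have hfmeas : AEMeasurable f (volume.restrict (Set.Ioi (0:ℝ))) :=
    hfc.aemeasurable measurableSet_Ioi
  have hfint' : MeasureTheory.IntegrableOn f (Set.Ioi (0:ℝ)) := by
    by_contra h
    rw [MeasureTheory.integral_undef h] at hfint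
    exact one_ne_zero hfint.symm
  have hfnn : 0 ≤ᵐ[volume.restrict (Set.Ioi (0:ℝ))] f := by
    rw [Filter.EventuallyLE, ae_restrict_iff' measurableSet_Ioi]
    exact ae_of_all _ fun x hx => (hfpos x hx).le
  have hLf : ∫⁻ x in Set.Ioi (0:ℝ), ENNReal.ofReal (f x) = 1 := by
    rw [← MeasureTheory.ofReal_integral_eq_lintegral_ofReal hfint' hfnn, hfint,
      ENNReal.ofReal_one]
  set κ : ℝ≥0∞ := ENNReal.ofReal (C₁ * (α * (α - 1))) with hκ
  have hαα : (0:ℝ) < α * (α - 1) := mul_pos (lt_trans one_pos hα) (sub_pos.2 hα)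
  have hptwise : ∀ᵐ x ∂(volume.restrict (Set.Ioi (0:ℝ))),
      ENNReal.ofReal (d.FPhi θ (g x / f x) * f x) ≤
        ENNReal.ofReal (2 * C₁ * f x) + κ * ENNReal.ofReal (Falpha α (g x / f x) * f x) := by
    rw [ae_restrict_iff' measurableSet_Ioi]
    refine ae_of_all _ fun x hx => ?_
    have hfx := hfpos x hx
    set y := g x / f x with hydef
    have hy : 0 ≤ y := div_nonneg (hg0 x hx) hfx.le
    have hFy := hkey y hy
    have hid : y ^ α = α * (α - 1) * Falpha α y + 1 := by
      have hne : α * (α - 1) ≠ 0 := ne_of_gt hαα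
      simp only [Falpha]
      field_simp
      rw [mul_div_cancel_left₀ _ (sub_ne_zero.2 hα.ne')]; ring
    have hsplit : d.FPhi θ y * f x ≤
        2 * C₁ * f x + C₁ * (α * (α - 1)) * (Falpha α y * f x) := by
      have h5 : d.FPhi θ y ≤ 2 * C₁ + C₁ * (α * (α - 1)) * Falpha α y := by
        calc d.FPhi θ y ≤ C₁ * (1 + y ^ α) := hFy
          _ = 2 * C₁ + C₁ * (α * (α - 1)) * Falpha α y := by rw [hid]; ring
      calc d.FPhi θ y * f x ≤ (2 * C₁ + C₁ * (α * (α - 1)) * Falpha α y) * f x :=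
            mul_le_mul_of_nonneg_right h5 hfx.le
        _ = 2 * C₁ * f x + C₁ * (α * (α - 1)) * (Falpha α y * f x) := by ring
    calc ENNReal.ofReal (d.FPhi θ y * f x)
        ≤ ENNReal.ofReal (2 * C₁ * f x + C₁ * (α * (α - 1)) * (Falpha α y * f x)) :=
          ENNReal.ofReal_le_ofReal hsplit
      _ ≤ ENNReal.ofReal (2 * C₁ * f x) +
            ENNReal.ofReal (C₁ * (α * (α - 1)) * (Falpha α y * f x)) :=
          ENNReal.ofReal_add_le
      _ = ENNReal.ofReal (2 * C₁ * f x) + κ * ENNReal.ofReal (Falpha α y * f x) := by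
          rw [hκ, ← ENNReal.ofReal_mul (by positivity)]
  have hmeas1 : AEMeasurable (fun x => ENNReal.ofReal (2 * C₁ * f x))
      (volume.restrict (Set.Ioi (0:ℝ))) := (hfmeas.const_mul _).ennreal_ofReal
  have hmain : Ddiv (d.FPhi θ) f g ≤
      ENNReal.ofReal (2 * C₁) * 1 + κ * Ddiv (Falpha α) f g := by
    rw [Ddiv, Ddiv]
    calc ∫⁻ x in Set.Ioi (0:ℝ), ENNReal.ofReal (d.FPhi θ (g x / f x) * f x)
        ≤ ∫⁻ x in Set.Ioi (0:ℝ),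
            (ENNReal.ofReal (2 * C₁ * f x) +
              κ * ENNReal.ofReal (Falpha α (g x / f x) * f x)) :=
          lintegral_mono_ae hptwise
      _ = (∫⁻ x in Set.Ioi (0:ℝ), ENNReal.ofReal (2 * C₁ * f x)) +
            ∫⁻ x in Set.Ioi (0:ℝ), κ * ENNReal.ofReal (Falpha α (g x / f x) * f x) :=
          MeasureTheory.lintegral_add_left' hmeas1 _
      _ = ENNReal.ofReal (2 * C₁) * 1 +
            κ * ∫⁻ x in Set.Ioi (0:ℝ), ENNReal.ofReal (Falpha α (g x / f x) * f x) := by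
          rw [MeasureTheory.lintegral_const_mul' κ _ ENNReal.ofReal_ne_top]
          congr 1
          have : ∀ x : ℝ, ENNReal.ofReal (2 * C₁ * f x) =
              ENNReal.ofReal (2 * C₁) * ENNReal.ofReal (f x) := fun x =>
            ENNReal.ofReal_mul (by positivity)
          simp_rw [this]
          rw [MeasureTheory.lintegral_const_mul' _ _ ENNReal.ofReal_ne_top, hLf]
  refine lt_of_le_of_lt hmain ?_
  apply ENNReal.add_lt_top.2
  constructor
  · exact ENNReal.mul_lt_top ENNReal.ofReal_lt_top ENNReal.one_lt_top
  · exact ENNReal.mul_lt_top ENNReal.ofReal_lt_top hDα
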